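/- arXiv:math/0205162 — 3 statements merged into one kernel-verified Lean document; each statement's English description precedes it below -/
import Mathlib

section
/- Let R be a commutative ring and X an R-module with an alternating bilinear form ⟨-,-⟩ : X × X → R (i.e., ⟨x,x⟩ = 0 for all x). Then X with operations x ▷ y = x + ⟨x,y⟩y and x ⊴ y = x − ⟨x,y⟩y satisfies the three quandle axioms. -/
theorem alternating_quandle_axioms (R : Type*) [CommRing R]
    (X : Type*) [AddCommGroup X] [Module R X]
    (B : X →ₗ[R] X →ₗ[R] R) (halt : ∀ v : X, B v v = 0)
    (tr br : X → X → X)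
    (htr : ∀ x y : X, tr x y = x + B x y • y)
    (hbr : ∀ x y : X, br x y = x - B x y • y) :
    (∀ x : X, tr x x = x) ∧
    (∀ x y : X, br (tr x y) y = x ∧ tr (br x y) y = x) ∧
    (∀ x y z : X, tr (tr x y) z = tr (tr x z) (tr y z)) := by
  have hskew : ∀ y z : X, B y z = - B z y := by
    intro y z
    have h := halt (y + z)
    simp [map_add, halt] at h
    linear_combination h
  refine ⟨?_, ?_, ?_⟩
  · intro x
    simp [htr, halt]
  · intro x y
    constructor
    · simp [htr, hbr, map_add, map_smul, halt, smul_smul]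
    · simp [htr, hbr, map_sub, map_smul, halt, smul_smul]
  · intro x y z
    simp only [htr, map_add, map_smul, halt, smul_smul, LinearMap.add_apply,
      LinearMap.smul_apply, smul_eq_mul]
    rw [hskew z y]
    module
end

section
/- The reduced alternating quandle of an R-module X with alternating bilinear form, i.e., the quotient of X by the {±1}-scalar action with operations induced from x ▷ y = x + ⟨x,y⟩y and x ⊴ y = x − ⟨x,y⟩y, satisfies the three quandle axioms. -/
/-- The {±1}-orbit equivalence: `x ∼ y` iff `y = x` or `y = -x`. -/
def signRel {X : Type*} [AddCommGroup X] (x y : X) : Prop := y = x ∨ y = -x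

theorem reduced_alternating_quandle_axioms (R : Type*) [CommRing R]
    (X : Type*) [AddCommGroup X] [Module R X]
    (B : X →ₗ[R] X →ₗ[R] R) (halt : ∀ v : X, B v v = 0)
    (tr br : Quot (signRel (X := X)) → Quot (signRel (X := X)) → Quot (signRel (X := X)))
    (htr : ∀ x y : X, tr (Quot.mk _ x) (Quot.mk _ y) = Quot.mk _ (x + B x y • y))
    (hbr : ∀ x y : X, br (Quot.mk _ x) (Quot.mk _ y) = Quot.mk _ (x - B x y • y)) :
    (∀ q : Quot (signRel (X := X)), tr q q = q) ∧
    (∀ q r : Quot (signRel (X := X)), br (tr q r) r = q ∧ tr (br q r) r = q) ∧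
    (∀ q r s : Quot (signRel (X := X)), tr (tr q r) s = tr (tr q s) (tr r s)) := by
  have hanti : ∀ x y : X, B x y = - B y x := by
    intro x y
    have h := halt (x + y)
    simp [map_add, halt] at h
    linear_combination h
  refine ⟨?_, ?_, ?_⟩
  · refine Quot.ind fun x => ?_
    rw [htr, halt]
    simp
  · refine Quot.ind fun x => Quot.ind fun y => ?_
    constructor
    · rw [htr, hbr]
      congr 1
      simp [map_add, map_smul, halt]
    · rw [hbr, htr]
      congr 1
      simp [map_sub, map_smul, halt]
  · refine Quot.ind fun x => Quot.ind fun y => Quot.ind fun z => ?_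
    rw [htr, htr, htr, htr, htr]
    congr 1
    simp only [map_add, map_smul, LinearMap.add_apply, LinearMap.smul_apply, halt,
      smul_eq_mul, mul_zero, add_zero, smul_add, smul_smul]
    rw [hanti z y]
    module
end

section
/- The set Q = {y/x : x, y ∈ ℤ, gcd(x,y) = 1} ∪ {I} (slopes up to simultaneous sign, plus a distinguished element I), with operations (v/u) ▷ (y/x) = (v − vxy + uy²)/(u + uxy − vx²), (v/u) ⊴ (y/x) = (v + vxy − uy²)/(u − uxy + vx²), I ▷ q = I, q ▷ I = q, I ⊴ q = I, q ⊴ I = q, satisfies the three quandle axioms. -/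
/-- Coprime pairs of integers, representing slopes on the torus. -/
def CoprimePair : Type := {p : ℤ × ℤ // IsCoprime p.1 p.2}

/-- Two coprime pairs are identified when they agree up to simultaneous sign change. -/
def slopeRel (p q : CoprimePair) : Prop :=
  q.1 = p.1 ∨ q.1 = (-p.1.1, -p.1.2)

/-- Slopes on the torus: coprime pairs up to sign. -/
def Slope : Type := Quot slopeRel

/-- The Dehn quandle of the torus: slopes together with the class `I` (= `none`)
of contractible simple closed curves. -/
def TorusDehn : Type := Option Slope

lemma cop_tr (u v x y : ℤ) (hu : IsCoprime u v) :
    IsCoprime (u + u * x * y - v * x ^ 2) (v - v * x * y + u * y ^ 2) := by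
  obtain ⟨a, b, hab⟩ := hu
  exact ⟨a * (1 - x * y) - b * y ^ 2, a * x ^ 2 + b * (1 + x * y), by linear_combination hab⟩

lemma cop_br (u v x y : ℤ) (hu : IsCoprime u v) :
    IsCoprime (u - u * x * y + v * x ^ 2) (v + v * x * y - u * y ^ 2) := by
  obtain ⟨a, b, hab⟩ := hu
  exact ⟨a * (1 + x * y) + b * y ^ 2, -(a * x ^ 2) + b * (1 - x * y), by linear_combination hab⟩

lemma slope_eq {a b c d : ℤ} (h1 : IsCoprime a b) (h2 : IsCoprime c d)
    (e1 : a = c) (e2 : b = d) :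
    (some (Quot.mk slopeRel ⟨(a, b), h1⟩) : TorusDehn) =
      some (Quot.mk slopeRel ⟨(c, d), h2⟩) := by
  subst e1; subst e2; rfl

lemma torus_ind (q : TorusDehn) :
    q = none ∨ ∃ (x y : ℤ) (h : IsCoprime x y), q = some (Quot.mk _ ⟨(x, y), h⟩) := by
  rcases q with _ | q
  · exact Or.inl rfl
  · refine Or.inr ?_
    induction q using Quot.ind with
    | _ p =>
      obtain ⟨⟨x, y⟩, h⟩ := p
      exact ⟨x, y, h, rfl⟩

theorem torus_dehn_quandle_axioms
    (tr br : TorusDehn → TorusDehn → TorusDehn)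
    (htr : ∀ (u v x y : ℤ) (hu : IsCoprime u v) (hx : IsCoprime x y)
      (h' : IsCoprime (u + u * x * y - v * x ^ 2) (v - v * x * y + u * y ^ 2)),
      tr (some (Quot.mk _ ⟨(u, v), hu⟩)) (some (Quot.mk _ ⟨(x, y), hx⟩)) =
        some (Quot.mk _ ⟨(u + u * x * y - v * x ^ 2, v - v * x * y + u * y ^ 2), h'⟩))
    (hbr : ∀ (u v x y : ℤ) (hu : IsCoprime u v) (hx : IsCoprime x y)
      (h' : IsCoprime (u - u * x * y + v * x ^ 2) (v + v * x * y - u * y ^ 2)),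
      br (some (Quot.mk _ ⟨(u, v), hu⟩)) (some (Quot.mk _ ⟨(x, y), hx⟩)) =
        some (Quot.mk _ ⟨(u - u * x * y + v * x ^ 2, v + v * x * y - u * y ^ 2), h'⟩))
    (htrI : ∀ q : TorusDehn, tr none q = none ∧ tr q none = q)
    (hbrI : ∀ q : TorusDehn, br none q = none ∧ br q none = q) :
    (∀ q : TorusDehn, tr q q = q) ∧
    (∀ q r : TorusDehn, br (tr q r) r = q ∧ tr (br q r) r = q) ∧
    (∀ q r s : TorusDehn, tr (tr q r) s = tr (tr q s) (tr r s)) := by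
  refine ⟨?_, ?_, ?_⟩
  · -- idempotence
    intro q
    rcases torus_ind q with rfl | ⟨x, y, h, rfl⟩
    · exact (htrI none).1
    · erw [htr x y x y h h (cop_tr x y x y h)]
      exact slope_eq _ h (by ring) (by ring)
  · -- right inverses
    intro q r
    rcases torus_ind q with rfl | ⟨u, v, hu, rfl⟩
    · rw [(htrI r).1, (hbrI r).1]
      exact ⟨rfl, (htrI r).1⟩
    rcases torus_ind r with rfl | ⟨x, y, hx, rfl⟩
    · erw [(htrI _).2, (hbrI _).2]
      exact ⟨rfl, (htrI _).2⟩
    constructor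
    · erw [htr u v x y hu hx (cop_tr u v x y hu),
        hbr _ _ x y (cop_tr u v x y hu) hx (cop_br _ _ x y (cop_tr u v x y hu))]
      exact slope_eq _ hu (by ring) (by ring)
    · erw [hbr u v x y hu hx (cop_br u v x y hu),
        htr _ _ x y (cop_br u v x y hu) hx (cop_tr _ _ x y (cop_br u v x y hu))]
      exact slope_eq _ hu (by ring) (by ring)
  · -- self-distributivity
    intro q r s
    rcases torus_ind q with rfl | ⟨u, v, hu, rfl⟩
    · rw [(htrI r).1, (htrI s).1]
      exact ((htrI _).1).symm
    rcases torus_ind r with rfl | ⟨x, y, hx, rfl⟩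
    · erw [(htrI _).2, (htrI s).1, (htrI _).2]
    rcases torus_ind s with rfl | ⟨z, w, hz, rfl⟩
    · erw [(htrI _).2, (htrI _).2, (htrI _).2]
    erw [htr u v x y hu hx (cop_tr u v x y hu),
      htr _ _ z w (cop_tr u v x y hu) hz (cop_tr _ _ z w (cop_tr u v x y hu)),
      htr u v z w hu hz (cop_tr u v z w hu),
      htr x y z w hx hz (cop_tr x y z w hx),
      htr _ _ _ _ (cop_tr u v z w hu) (cop_tr x y z w hx)
        (cop_tr _ _ _ _ (cop_tr u v z w hu))]
    exact slope_eq _ _ (by ring) (by ring)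
end
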